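/- Let b ≥ 1 be an integer, κ > −1 a real number, and let λ_1,…,λ_b be pairwise distinct complex numbers each satisfying the indicial equation λ_j(λ_j+1)⋯(λ_j+b−1) = (1+κ)(2+κ)⋯(b+κ) and ∑_{k=0}^{b−1} 1/(λ_j+k) ≠ 0. Let s_0,…,s_{b−1} be arbitrary complex numbers and define β_j = ∑_{r=0}^{b−1} s_r · C(λ_j+b−1, b−r−1) / [C(b,r)·(b−r)·C(b+κ, b)·∑_{k=0}^{b−1} 1/(λ_j+k)] for 1 ≤ j ≤ b. Then the β_j solve the system of linear equations ∑_{j=1}^{b} C(λ_j+ℓ−1, ℓ)·β_j = s_ℓ for every 0 ≤ ℓ ≤ b−1. -/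

import Mathlib

open Polynomial Finset


/-- The generalized binomial coefficient `C(x, n) = x(x-1)⋯(x-n+1)/n!` over `ℂ`. -/
noncomputable def genBinomC (x : ℂ) (n : ℕ) : ℂ :=
    (∏ i ∈ Finset.range n, (x - i)) / (n.factorial : ℂ)

lemma genBinomC_shift (x : ℂ) (n : ℕ) :
    genBinomC (x + (n : ℂ) - 1) n = (∏ k ∈ Finset.range n, (x + k)) / (n.factorial : ℂ) := by
  unfold genBinomC
  congr 1
  rw [← Finset.prod_range_reflect (fun k => x + (k : ℂ)) n]
  refine Finset.prod_congr rfl fun i hi => ?_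
  rw [Finset.mem_range] at hi
  have h2 : i ≤ n - 1 := by omega
  rw [Nat.cast_sub h2, Nat.cast_sub (by omega : 1 ≤ n)]
  push_cast
  ring

lemma lag_sum {b : ℕ} (lam : Fin b → ℂ) (hinj : Function.Injective lam)
    (g : ℂ[X]) (hg : g.degree < (b : ℕ)) :
    ∑ j : Fin b, g.eval (lam j) * Lagrange.nodalWeight Finset.univ lam j = g.coeff (b - 1) := by
  have hvs : Set.InjOn lam (Finset.univ : Finset (Fin b)) := hinj.injOn
  have hE := Lagrange.eq_interpolate hvs
    (by rw [Finset.card_univ, Fintype.card_fin]; exact hg)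
  conv_rhs => rw [hE]
  rw [Lagrange.interpolate_apply, Polynomial.finset_sum_coeff]
  refine Finset.sum_congr rfl fun j _ => ?_
  have hj : j ∈ (Finset.univ : Finset (Fin b)) := Finset.mem_univ j
  rw [Lagrange.basis_eq_prod_sub_inv_mul_nodal_div hj,
    ← Lagrange.nodal_erase_eq_nodal_div hj]
  have hdeg : (Lagrange.nodal ((Finset.univ : Finset (Fin b)).erase j) lam).natDegree = b - 1 := by
    rw [Lagrange.natDegree_nodal, Finset.card_erase_of_mem hj, Finset.card_univ,
      Fintype.card_fin]
  rw [← mul_assoc, ← Polynomial.C_mul, Polynomial.coeff_C_mul, ← hdeg,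
    (Lagrange.nodal_monic).coeff_natDegree, mul_one, mul_comm]

lemma nodal_eval_erase {b : ℕ} (hb : 1 ≤ b) (P₀ : ℂ) (hP₀ : P₀ ≠ 0)
    (lam : Fin b → ℂ) (hinj : Function.Injective lam)
    (hind : ∀ j : Fin b, ∏ k ∈ Finset.range b, (lam j + (k : ℂ)) = P₀) (j : Fin b) :
    Polynomial.eval (lam j) (Lagrange.nodal ((Finset.univ : Finset (Fin b)).erase j) lam)
      = P₀ * ∑ k ∈ Finset.range b, (lam j + (k : ℂ))⁻¹ := by
  have hvs : Set.InjOn lam (Finset.univ : Finset (Fin b)) := hinj.injOn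
  set R : ℂ[X] := ∏ k ∈ Finset.range b, (X + C (k : ℂ)) with hR
  have hRmonic : R.Monic := monic_prod_of_monic _ _ fun k _ => monic_X_add_C _
  have hRdeg : R.natDegree = b := by
    rw [hR, natDegree_prod_of_monic _ _ fun k _ => monic_X_add_C _]
    trans ∑ k ∈ Finset.range b, 1
    · exact Finset.sum_congr rfl fun k _ => natDegree_X_add_C _
    · simp
  set N : ℂ[X] := Lagrange.nodal (Finset.univ : Finset (Fin b)) lam with hN
  have hNmonic : N.Monic := Lagrange.nodal_monic
  have hNdeg : N.natDegree = b := by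
    rw [hN, Lagrange.natDegree_nodal, Finset.card_univ, Fintype.card_fin]
  have hevalR : ∀ i : Fin b, R.eval (lam i) = P₀ := by
    intro i
    rw [hR, eval_prod, ← hind i]
    exact Finset.prod_congr rfl fun k _ => by simp
  have key : N = R - C P₀ := by
    have h0 : N - (R - C P₀) = 0 := by
      apply Polynomial.eq_zero_of_degree_lt_of_eval_index_eq_zero
        (Finset.univ : Finset (Fin b)) hvs
      · rw [Finset.card_univ, Fintype.card_fin]
        have h1 : (N - R).degree < (b : WithBot ℕ) := by
          have hdegNR : N.degree = R.degree := by
            rw [Polynomial.degree_eq_natDegree hNmonic.ne_zero,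
              Polynomial.degree_eq_natDegree hRmonic.ne_zero, hNdeg, hRdeg]
          have := Polynomial.degree_sub_lt hdegNR hNmonic.ne_zero
            (hNmonic.leadingCoeff.trans hRmonic.leadingCoeff.symm)
          rwa [Polynomial.degree_eq_natDegree hNmonic.ne_zero, hNdeg] at this
        have h2 : (C P₀).degree < (b : WithBot ℕ) :=
          lt_of_le_of_lt degree_C_le (by exact_mod_cast WithBot.coe_lt_coe.mpr hb)
        calc (N - (R - C P₀)).degree = ((N - R) + C P₀).degree := by ring_nf
          _ < (b : WithBot ℕ) := lt_of_le_of_lt (degree_add_le _ _) (max_lt h1 h2)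
      · intro i _
        simp [eval_sub, hevalR i, hN, Lagrange.eval_nodal_at_node (Finset.mem_univ i)]
    linear_combination (norm := ring_nf) h0
  have hRnodal : R = Lagrange.nodal (Finset.range b) (fun k => -(k : ℂ)) := by
    rw [hR, Lagrange.nodal]
    exact Finset.prod_congr rfl fun k _ => by rw [map_neg, sub_neg_eq_add]
  have hder : Polynomial.eval (lam j) (derivative N)
      = ∑ k ∈ Finset.range b, ∏ m ∈ (Finset.range b).erase k, (lam j + (m : ℂ)) := by
    rw [key, derivative_sub, derivative_C, sub_zero, hRnodal, Lagrange.derivative_nodal,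
      eval_finset_sum]
    refine Finset.sum_congr rfl fun k _ => ?_
    rw [Lagrange.eval_nodal]
    exact Finset.prod_congr rfl fun m _ => by ring
  have hnz : ∀ k ∈ Finset.range b, lam j + (k : ℂ) ≠ 0 := by
    intro k hk
    have := hind j
    intro h0
    exact hP₀ (by rw [← this]; exact Finset.prod_eq_zero hk h0)
  rw [← Lagrange.eval_nodal_derivative_eval_node_eq (Finset.mem_univ j), ← hN, hder,
    Finset.mul_sum]
  refine Finset.sum_congr rfl fun k hk => ?_
  rw [← hind j, ← Finset.mul_prod_erase _ _ hk, mul_comm (lam j + (k:ℂ)) _, mul_assoc,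
    mul_inv_cancel₀ (hnz k hk), mul_one]

lemma core_sum {b : ℕ} (hb : 1 ≤ b) (P₀ : ℂ) (hP₀ : P₀ ≠ 0)
    (lam : Fin b → ℂ) (hinj : Function.Injective lam)
    (hind : ∀ j : Fin b, ∏ k ∈ Finset.range b, (lam j + (k : ℂ)) = P₀)
    (ℓ r : ℕ) (hℓ : ℓ < b) (hr : r < b) :
    ∑ j : Fin b, (∏ k ∈ Finset.range ℓ, (lam j + (k : ℂ)))
        * (∏ k ∈ Finset.Ico (r+1) b, (lam j + (k : ℂ)))
        * Lagrange.nodalWeight Finset.univ lam j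
      = if ℓ = r then 1 else 0 := by
  have hgen : ∀ T : Finset ℕ, T.card < b →
      ∑ j : Fin b, (∏ k ∈ T, (lam j + (k : ℂ))) * Lagrange.nodalWeight Finset.univ lam j
        = if T.card = b - 1 then 1 else 0 := by
    intro T hT
    set g : ℂ[X] := ∏ k ∈ T, (X + C (k : ℂ)) with hg
    have hgmonic : g.Monic := monic_prod_of_monic _ _ fun k _ => monic_X_add_C _
    have hgdeg : g.natDegree = T.card := by
      rw [hg, natDegree_prod_of_monic _ _ fun k _ => monic_X_add_C _]
      trans ∑ k ∈ T, 1
      · exact Finset.sum_congr rfl fun k _ => natDegree_X_add_C _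
      · simp
    have hdeglt : g.degree < (b : ℕ) := by
      rw [Polynomial.degree_eq_natDegree hgmonic.ne_zero, hgdeg]
      exact_mod_cast WithBot.coe_lt_coe.mpr hT
    have hstep : (∑ j : Fin b,
        (∏ k ∈ T, (lam j + (k : ℂ))) * Lagrange.nodalWeight Finset.univ lam j)
        = ∑ j : Fin b, g.eval (lam j) * Lagrange.nodalWeight Finset.univ lam j := by
      refine Finset.sum_congr rfl fun j _ => ?_
      rw [hg, eval_prod]
      congr 1
      exact Finset.prod_congr rfl fun k _ => by simp
    rw [hstep, lag_sum lam hinj g hdeglt]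
    by_cases h : T.card = b - 1
    · rw [if_pos h, ← h, ← hgdeg, hgmonic.coeff_natDegree]
    · rw [if_neg h]
      exact Polynomial.coeff_eq_zero_of_natDegree_lt (by rw [hgdeg]; omega)
  rcases le_or_gt ℓ r with hle | hlt
  · have hdisj : Disjoint (Finset.range ℓ) (Finset.Ico (r+1) b) := by
      rw [Finset.disjoint_left]
      intro a ha hb'
      rw [Finset.mem_range] at ha
      rw [Finset.mem_Ico] at hb'
      omega
    have hcard : (Finset.range ℓ ∪ Finset.Ico (r+1) b).card = ℓ + (b - (r+1)) := by
      rw [Finset.card_union_of_disjoint hdisj, Finset.card_range, Nat.card_Ico]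
    have hstep : (∑ j : Fin b, (∏ k ∈ Finset.range ℓ, (lam j + (k : ℂ)))
        * (∏ k ∈ Finset.Ico (r+1) b, (lam j + (k : ℂ)))
        * Lagrange.nodalWeight Finset.univ lam j)
        = ∑ j : Fin b, (∏ k ∈ Finset.range ℓ ∪ Finset.Ico (r+1) b, (lam j + (k : ℂ)))
          * Lagrange.nodalWeight Finset.univ lam j := by
      refine Finset.sum_congr rfl fun j _ => ?_
      rw [Finset.prod_union hdisj]
    rw [hstep, hgen _ (by omega), hcard]
    by_cases hcase : ℓ = r
    · rw [if_pos (by omega), if_pos hcase]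
    · rw [if_neg (by omega), if_neg hcase]
  · have key : ∀ j : Fin b, (∏ k ∈ Finset.range ℓ, (lam j + (k : ℂ)))
        * (∏ k ∈ Finset.Ico (r+1) b, (lam j + (k : ℂ)))
        = P₀ * ∏ k ∈ Finset.Ico (r+1) ℓ, (lam j + (k : ℂ)) := by
      intro j
      have h1 : (∏ k ∈ Finset.range (r+1), (lam j + (k : ℂ)))
          * ∏ k ∈ Finset.Ico (r+1) ℓ, (lam j + (k : ℂ))
          = ∏ k ∈ Finset.range ℓ, (lam j + (k : ℂ)) := by
        rw [Finset.range_eq_Ico, Finset.range_eq_Ico]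
        exact Finset.prod_Ico_consecutive _ (by omega) (by omega)
      have h2 : (∏ k ∈ Finset.range (r+1), (lam j + (k : ℂ)))
          * ∏ k ∈ Finset.Ico (r+1) b, (lam j + (k : ℂ)) = P₀ := by
        rw [← hind j, Finset.range_eq_Ico, Finset.range_eq_Ico]
        exact Finset.prod_Ico_consecutive _ (by omega) (by omega)
      rw [← h1, ← h2]
      ring
    have hc : (Finset.Ico (r+1) ℓ).card = ℓ - (r+1) := Nat.card_Ico _ _
    have hstep : (∑ j : Fin b, (∏ k ∈ Finset.range ℓ, (lam j + (k : ℂ)))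
        * (∏ k ∈ Finset.Ico (r+1) b, (lam j + (k : ℂ)))
        * Lagrange.nodalWeight Finset.univ lam j)
        = P₀ * ∑ j : Fin b, (∏ k ∈ Finset.Ico (r+1) ℓ, (lam j + (k : ℂ)))
          * Lagrange.nodalWeight Finset.univ lam j := by
      rw [Finset.mul_sum]
      refine Finset.sum_congr rfl fun j _ => ?_
      rw [key j]
      ring
    rw [hstep, hgen _ (by omega), if_neg (by omega), if_neg (by omega), mul_zero]

set_option maxHeartbeats 1000000 in
/-- Let `b ≥ 1`, `κ > -1`, and let `λ_1, …, λ_b` be pairwise distinct complex numbers satisfying the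
indicial equation `λ_j(λ_j+1)⋯(λ_j+b-1) = (1+κ)(2+κ)⋯(b+κ)` with `∑_{k=0}^{b-1} 1/(λ_j+k) ≠ 0`.
For arbitrary `s_0, …, s_{b-1} ∈ ℂ` set
`β_j = ∑_{r=0}^{b-1} s_r · C(λ_j+b-1, b-r-1) / (C(b,r)·(b-r)·C(b+κ,b)·∑_{k=0}^{b-1} 1/(λ_j+k))`.
Then `∑_{j=1}^{b} C(λ_j+ℓ-1, ℓ)·β_j = s_ℓ` for all `0 ≤ ℓ ≤ b-1`. -/
theorem linear_system_solution (b : ℕ) (hb : 1 ≤ b) (κ : ℝ) (hκ : -1 < κ)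
    (lam : Fin b → ℂ) (hinj : Function.Injective lam)
    (hind : ∀ j : Fin b,
      ∏ k ∈ Finset.range b, (lam j + (k : ℂ)) = ∏ k ∈ Finset.range b, (1 + (κ : ℂ) + (k : ℂ)))
    (hsum : ∀ j : Fin b, ∑ k ∈ Finset.range b, (lam j + (k : ℂ))⁻¹ ≠ 0)
    (s : ℕ → ℂ) (β : Fin b → ℂ)
    (hβ : ∀ j : Fin b, β j = ∑ r ∈ Finset.range b,
      s r * genBinomC (lam j + (b : ℂ) - 1) (b - r - 1)
        / (genBinomC (b : ℂ) r * ((b : ℂ) - (r : ℂ)) * genBinomC ((b : ℂ) + (κ : ℂ)) b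
            * ∑ k ∈ Finset.range b, (lam j + (k : ℂ))⁻¹)) :
    ∀ ℓ : ℕ, ℓ ≤ b - 1 →
      ∑ j : Fin b, genBinomC (lam j + (ℓ : ℂ) - 1) ℓ * β j = s ℓ := by
  intro ℓ hℓ'
  have hℓ : ℓ < b := by omega
  set P₀ : ℂ := ∏ k ∈ Finset.range b, (1 + (κ : ℂ) + (k : ℂ)) with hP₀def
  have hP₀ : P₀ ≠ 0 := by
    rw [hP₀def]
    refine Finset.prod_ne_zero_iff.mpr fun k _ => ?_
    have h1 : (1 + (κ : ℂ) + (k : ℂ)) = ((1 + κ + (k : ℝ) : ℝ) : ℂ) := by push_cast; ring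
    rw [h1]
    refine Complex.ofReal_ne_zero.mpr (ne_of_gt ?_)
    have hk : (0 : ℝ) ≤ (k : ℝ) := Nat.cast_nonneg k
    linarith
  have hfac : ∀ n : ℕ, ((n.factorial : ℂ)) ≠ 0 :=
    fun n => Nat.cast_ne_zero.mpr n.factorial_ne_zero
  have hnw : ∀ j : Fin b, Lagrange.nodalWeight Finset.univ lam j
      = (P₀ * ∑ k ∈ Finset.range b, (lam j + (k : ℂ))⁻¹)⁻¹ := fun j => by
    rw [Lagrange.nodalWeight_eq_eval_nodal_erase_inv,
      nodal_eval_erase hb P₀ hP₀ lam hinj hind j]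
  have hCκ : genBinomC ((b : ℂ) + (κ : ℂ)) b = P₀ / (b.factorial : ℂ) := by
    rw [show ((b : ℂ) + (κ : ℂ)) = (1 + (κ : ℂ)) + (b : ℂ) - 1 by ring, genBinomC_shift,
      hP₀def]
  have hB : ∀ (j : Fin b) (r : ℕ), r < b →
      genBinomC (lam j + (b : ℂ) - 1) (b - r - 1)
        = (∏ k ∈ Finset.Ico (r+1) b, (lam j + (k : ℂ))) / (((b - r - 1).factorial : ℂ)) := by
    intro j r hr
    have hcast : lam j + (b : ℂ) - 1
        = (lam j + ((r + 1 : ℕ) : ℂ)) + ((b - r - 1 : ℕ) : ℂ) - 1 := by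
      rw [show b - r - 1 = b - (r + 1) by omega, Nat.cast_sub (by omega)]
      push_cast
      ring
    rw [hcast, genBinomC_shift]
    congr 1
    rw [Finset.prod_Ico_eq_prod_range, show b - (r + 1) = b - r - 1 by omega]
    refine Finset.prod_congr rfl fun i _ => ?_
    push_cast
    ring
  have hden : ∀ r : ℕ, r < b →
      genBinomC (b : ℂ) r * ((b : ℂ) - (r : ℂ)) * genBinomC ((b : ℂ) + (κ : ℂ)) b
        = ((b.descFactorial (r+1) : ℕ) : ℂ) / (r.factorial : ℂ) * (P₀ / (b.factorial : ℂ)) := by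
    intro r hr
    rw [hCκ]
    congr 1
    unfold genBinomC
    rw [div_mul_eq_mul_div, ← Finset.prod_range_succ (fun i => (b : ℂ) - i) r]
    congr 1
    rw [Nat.descFactorial_eq_prod_range, Nat.cast_prod]
    refine (Finset.prod_congr rfl fun i hi => ?_).symm
    rw [Finset.mem_range] at hi
    rw [Nat.cast_sub (by omega)]
  have hinner : ∀ r : ℕ, r < b →
      (∑ j : Fin b, genBinomC (lam j + (ℓ : ℂ) - 1) ℓ *
        (s r * genBinomC (lam j + (b : ℂ) - 1) (b - r - 1)
        / (genBinomC (b : ℂ) r * ((b : ℂ) - (r : ℂ)) * genBinomC ((b : ℂ) + (κ : ℂ)) b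
            * ∑ k ∈ Finset.range b, (lam j + (k : ℂ))⁻¹)))
      = if ℓ = r then s r else 0 := by
    intro r hr
    set den : ℂ := genBinomC (b : ℂ) r * ((b : ℂ) - (r : ℂ)) * genBinomC ((b : ℂ) + (κ : ℂ)) b
      with hden_def
    have hdenval : den = ((b.descFactorial (r+1) : ℕ) : ℂ) / (r.factorial : ℂ)
        * (P₀ / (b.factorial : ℂ)) := hden r hr
    have hdesc : ((b.descFactorial (r+1) : ℕ) : ℂ) ≠ 0 := by
      have h2 := Nat.factorial_mul_descFactorial (show r + 1 ≤ b by omega)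
      refine Nat.cast_ne_zero.mpr fun h0 => ?_
      rw [h0, mul_zero] at h2
      exact Nat.factorial_ne_zero b h2.symm
    have hdenne : den ≠ 0 := by
      rw [hdenval]
      exact mul_ne_zero (div_ne_zero hdesc (hfac r)) (div_ne_zero hP₀ (hfac b))
    clear_value den
    set c : ℂ := s r * P₀ / ((ℓ.factorial : ℂ) * (((b - r - 1).factorial : ℂ)) * den) with hc
    clear_value c
    have hpoint : ∀ j : Fin b,
        genBinomC (lam j + (ℓ : ℂ) - 1) ℓ *
          (s r * genBinomC (lam j + (b : ℂ) - 1) (b - r - 1)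
            / (den * ∑ k ∈ Finset.range b, (lam j + (k : ℂ))⁻¹))
        = c * ((∏ k ∈ Finset.range ℓ, (lam j + (k : ℂ)))
            * (∏ k ∈ Finset.Ico (r+1) b, (lam j + (k : ℂ)))
            * Lagrange.nodalWeight Finset.univ lam j) := by
      intro j
      rw [genBinomC_shift, hB j r hr, hnw j, hc]
      have hPinv : P₀ * P₀⁻¹ = 1 := mul_inv_cancel₀ hP₀
      linear_combination (-(s r * (∏ k ∈ Finset.range ℓ, (lam j + (k : ℂ)))
        * (∏ k ∈ Finset.Ico (r+1) b, (lam j + (k : ℂ)))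
        / ((ℓ.factorial : ℂ) * (((b - r - 1).factorial : ℂ)) * den
            * ∑ k ∈ Finset.range b, (lam j + (k : ℂ))⁻¹))) * hPinv
    rw [Finset.sum_congr rfl fun j _ => hpoint j, ← Finset.mul_sum,
      core_sum hb P₀ hP₀ lam hinj hind ℓ r hℓ hr]
    clear hpoint
    rcases eq_or_ne ℓ r with h | h
    · subst h
      rw [if_pos rfl, if_pos rfl, mul_one, hc, hdenval]
      have hnat : ((b - ℓ - 1).factorial) * (b.descFactorial (ℓ+1)) = b.factorial := by
        have h2 := Nat.factorial_mul_descFactorial (show ℓ + 1 ≤ b by omega)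
        rwa [show b - (ℓ + 1) = b - ℓ - 1 by omega] at h2
      have hcast : (((b - ℓ - 1).factorial : ℂ)) * ((b.descFactorial (ℓ+1) : ℕ) : ℂ)
          = (b.factorial : ℂ) := by exact_mod_cast hnat
      have key3 : ((ℓ.factorial : ℂ)) * (((b - ℓ - 1).factorial : ℂ))
          * (((b.descFactorial (ℓ+1) : ℕ) : ℂ) * P₀)
          = P₀ * ((ℓ.factorial : ℂ) * (b.factorial : ℂ)) := by
        linear_combination (ℓ.factorial : ℂ) * P₀ * hcast
      have key2 : ((ℓ.factorial : ℂ)) * (((b - ℓ - 1).factorial : ℂ))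
          * (((b.descFactorial (ℓ+1) : ℕ) : ℂ) / (ℓ.factorial : ℂ) * (P₀ / (b.factorial : ℂ)))
          = P₀ := by
        rw [div_mul_div_comm, ← mul_div_assoc, key3,
          mul_div_cancel_right₀ _ (mul_ne_zero (hfac ℓ) (hfac b))]
      rw [key2, mul_div_assoc, div_self hP₀, mul_one]
    · rw [if_neg h, if_neg h, mul_zero]
  calc ∑ j : Fin b, genBinomC (lam j + (ℓ : ℂ) - 1) ℓ * β j
      = ∑ j : Fin b, ∑ r ∈ Finset.range b, genBinomC (lam j + (ℓ : ℂ) - 1) ℓ *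
          (s r * genBinomC (lam j + (b : ℂ) - 1) (b - r - 1)
            / (genBinomC (b : ℂ) r * ((b : ℂ) - (r : ℂ)) * genBinomC ((b : ℂ) + (κ : ℂ)) b
                * ∑ k ∈ Finset.range b, (lam j + (k : ℂ))⁻¹)) := by
        refine Finset.sum_congr rfl fun j _ => ?_
        rw [hβ j, Finset.mul_sum]
    _ = ∑ r ∈ Finset.range b, ∑ j : Fin b, genBinomC (lam j + (ℓ : ℂ) - 1) ℓ *
          (s r * genBinomC (lam j + (b : ℂ) - 1) (b - r - 1)
            / (genBinomC (b : ℂ) r * ((b : ℂ) - (r : ℂ)) * genBinomC ((b : ℂ) + (κ : ℂ)) b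
                * ∑ k ∈ Finset.range b, (lam j + (k : ℂ))⁻¹)) := Finset.sum_comm
    _ = ∑ r ∈ Finset.range b, (if ℓ = r then s r else 0) :=
        Finset.sum_congr rfl fun r hr => hinner r (Finset.mem_range.mp hr)
    _ = s ℓ := by rw [Finset.sum_ite_eq (Finset.range b) ℓ s, if_pos (Finset.mem_range.mpr hℓ)]
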